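/- Let C be a Λ-MT code with block lengths (m_1,…,m_ℓ), where Λ = (λ_1,…,λ_ℓ), and set Γ = (λ_ℓ^{−1}, λ_{ℓ−1}^{−1},…,λ_1^{−1}). Then the reversed code R of C (obtained by reversing the coordinates of each codeword) is a Γ-MT code with block lengths (m_ℓ, m_{ℓ−1},…,m_1), and B^T·J_ℓ is a GPM of R, where H is a GPM of the Euclidean dual C^⊥, B is the polynomial matrix satisfying B·H = diag(x^{m_1}−λ_1^{−1},…,x^{m_ℓ}−λ_ℓ^{−1}), and J_ℓ is the ℓ×ℓ backward identity matrix. -/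

import Mathlib

open Polynomial Matrix

/-- constacyclic shift with constant `lam` on one block of length `m`:
`(a₀, …, a_{m-1}) ↦ (lam * a_{m-1}, a₀, …, a_{m-2})`. -/
def blockShift {F : Type*} [Field F] (lam : F) {m : ℕ} (a : Fin m → F) : Fin m → F :=
  fun j => if j.val = 0 then lam * a ⟨m - 1, by have := j.isLt; omega⟩
           else a ⟨j.val - 1, by have := j.isLt; omega⟩

/-- `CC ⊆ ⊕ᵢ F^{m i}` is a Λ-multi-twisted code: it is invariant under the blockwise
constacyclic shift `T_Λ`. -/
def IsMT {F : Type*} [Field F] {ℓ : ℕ} (lam : Fin ℓ → F) {m : Fin ℓ → ℕ}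
    (CC : Submodule F (∀ i, Fin (m i) → F)) : Prop :=
  ∀ v ∈ CC, (fun i => blockShift (lam i) (v i)) ∈ CC

/-- from a polynomial vector in `(F[x])^ℓ` to a blocked vector: reduce component `i`
modulo `x^{m i} - λᵢ` and take the coefficients. -/
noncomputable def toCode {F : Type*} [Field F] {ℓ : ℕ} (lam : Fin ℓ → F) (m : Fin ℓ → ℕ)
    (q : Fin ℓ → Polynomial F) : ∀ i, Fin (m i) → F :=
  fun i j => ((q i) %ₘ (X ^ (m i) - Polynomial.C (lam i))).coeff j

/-- `G` is a generator polynomial matrix (GPM) of the Λ-MT code `CC`: its rows form a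
minimal generating set (equivalently, since the corresponding submodule of `(F[x])^ℓ` has
rank `ℓ`, a linearly independent generating set) of the `F[x]`-submodule of `(F[x])^ℓ`
corresponding to `CC`, namely `{q | toCode lam m q ∈ CC}`. -/
def IsGPM {F : Type*} [Field F] {ℓ : ℕ} (lam : Fin ℓ → F) (m : Fin ℓ → ℕ)
    (CC : Submodule F (∀ i, Fin (m i) → F))
    (G : Matrix (Fin ℓ) (Fin ℓ) (Polynomial F)) : Prop :=
  LinearIndependent (Polynomial F) (fun i => G i) ∧
  (Submodule.span (Polynomial F) (Set.range (fun i => G i)) :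
      Set (Fin ℓ → Polynomial F)) = {q | toCode lam m q ∈ CC}

/-- Euclidean dual of a blocked code. -/
def dualCodeMT {F : Type*} [Field F] {ℓ : ℕ} {m : Fin ℓ → ℕ}
    (CC : Submodule F (∀ i, Fin (m i) → F)) : Submodule F (∀ i, Fin (m i) → F) where
  carrier := {v | ∀ c ∈ CC, ∑ i, ∑ j, c i j * v i j = 0}
  zero_mem' := by intro c hc; simp
  add_mem' := by
    intro a b ha hb c hc
    simp only [Set.mem_setOf_eq] at *
    simp only [Pi.add_apply, mul_add, Finset.sum_add_distrib, ha c hc, hb c hc, add_zero]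
  smul_mem' := by
    intro r v hv c hc
    simp only [Set.mem_setOf_eq] at *
    have h1 : ∀ i, ∑ j, c i j * (r • v) i j = r * ∑ j, c i j * v i j := by
      intro i
      rw [Finset.mul_sum]
      exact Finset.sum_congr rfl (fun j _ => by simp only [Pi.smul_apply, smul_eq_mul]; ring)
    simp only [h1, ← Finset.mul_sum, hv c hc, mul_zero]

/-- reversal of the coordinates of a blocked vector: block `i` of the result is the
reversal of block `ℓ-1-i` of the input. -/
def revMT {F : Type*} [Field F] {ℓ : ℕ} {m : Fin ℓ → ℕ} :
    (∀ i : Fin ℓ, Fin (m i) → F) →ₗ[F] (∀ i : Fin ℓ, Fin (m i.rev) → F) where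
  toFun v := fun i j => v i.rev j.rev
  map_add' _ _ := rfl
  map_smul' _ _ := rfl

namespace Stmt7Aux

variable {F : Type*} [Field F]

lemma degLt_natDeg {M : ℕ} (hM : 0 < M) {p : F[X]} (h : p.degree < (M : WithBot ℕ)) :
    p.natDegree ≤ M - 1 := by
  rcases eq_or_ne p 0 with rfl | hp
  · simp
  · have := (Polynomial.natDegree_lt_iff_degree_lt hp).2 h
    omega

lemma coeff_mul_mod {M : ℕ} (hM : 0 < M) (μ : F) {a b : F[X]}
    (ha : a.degree < ((X : F[X]) ^ M - C μ).degree)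
    (hb : b.degree < ((X : F[X]) ^ M - C μ).degree) :
    ((a * b) %ₘ ((X : F[X]) ^ M - C μ)).coeff (M - 1) = (a * b).coeff (M - 1) := by
  set δ : F[X] := (X : F[X]) ^ M - C μ with hδdef
  have hδ : δ.Monic := monic_X_pow_sub_C _ hM.ne'
  have hδdeg : δ.degree = (M : WithBot ℕ) := degree_X_pow_sub_C hM μ
  by_cases h : (a * b).degree < δ.degree
  · rw [(modByMonic_eq_self_iff hδ).2 h]
  · have heq : (a * b) %ₘ δ = a * b - δ * ((a * b) /ₘ δ) :=
      eq_sub_of_add_eq (modByMonic_add_div (a * b) δ)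
    rw [heq, Polynomial.coeff_sub]
    have hna : a.natDegree ≤ M - 1 := degLt_natDeg hM (hδdeg ▸ ha)
    have hnb : b.natDegree ≤ M - 1 := degLt_natDeg hM (hδdeg ▸ hb)
    have hMle : M ≤ (a * b).natDegree := by
      by_contra h'
      push_neg at h'
      exact h (lt_of_le_of_lt (degree_le_natDegree)
        (by rw [hδdeg]; exact_mod_cast h'))
    have hmul : (a * b).natDegree ≤ a.natDegree + b.natDegree := natDegree_mul_le
    have hdc : ((a * b) /ₘ δ).natDegree = (a * b).natDegree - M := by
      rw [natDegree_divByMonic _ hδ, hδdef, natDegree_X_pow_sub_C]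
    have hdc' : ((a * b) /ₘ δ).natDegree < M - 1 := by omega
    have hc : (δ * ((a * b) /ₘ δ)).coeff (M - 1) = 0 := by
      rw [hδdef, sub_mul, Polynomial.coeff_sub, coeff_X_pow_mul',
        if_neg (by omega : ¬ M ≤ M - 1), coeff_C_mul,
        coeff_eq_zero_of_natDegree_lt hdc', mul_zero, zero_sub, neg_eq_zero]
    rw [hc, sub_zero]

/-- pairing identity: the "reversed dot product" of coefficient vectors equals the
top coefficient of the reduced product. -/
lemma pair_sum {M : ℕ} (hM : 0 < M) (μ : F) (f g : F[X]) :
    ∑ j : Fin M, (f %ₘ ((X : F[X]) ^ M - C μ)).coeff j *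
      (g %ₘ ((X : F[X]) ^ M - C μ)).coeff (M - 1 - j) =
    ((f * g) %ₘ ((X : F[X]) ^ M - C μ)).coeff (M - 1) := by
  set δ : F[X] := (X : F[X]) ^ M - C μ with hδdef
  have hδ : δ.Monic := monic_X_pow_sub_C _ hM.ne'
  set a := f %ₘ δ with hadef
  set b := g %ₘ δ with hbdef
  have hf := modByMonic_add_div f δ
  have hg := modByMonic_add_div g δ
  have hfa : f - a = δ * (f /ₘ δ) := by
    rw [sub_eq_iff_eq_add']; exact hf.symm
  have hgb : g - b = δ * (g /ₘ δ) := by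
    rw [sub_eq_iff_eq_add']; exact hg.symm
  have hdvd : δ ∣ f * g - a * b := by
    refine ⟨(f /ₘ δ) * g + a * (g /ₘ δ), ?_⟩
    have hcalc : f * g - a * b = (f - a) * g + a * (g - b) := by ring
    rw [hcalc, hfa, hgb]; ring
  have h1 : (f * g) %ₘ δ = (a * b) %ₘ δ := modByMonic_eq_of_dvd_sub hδ hdvd
  rw [h1, coeff_mul_mod hM μ (degree_modByMonic_lt f hδ) (degree_modByMonic_lt g hδ)]
  rw [Polynomial.coeff_mul, Finset.Nat.sum_antidiagonal_eq_sum_range_succ_mk,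
    show (M - 1).succ = M by omega]
  exact Fin.sum_univ_eq_sum_range (fun k => a.coeff k * b.coeff (M - 1 - k)) M

/-- the coefficients of `(X * f) %ₘ (X^M - C μ)` are the constacyclic shift of
those of `f %ₘ (X^M - C μ)`. -/
lemma mod_X_mul {M : ℕ} (hM : 0 < M) (μ : F) (f : F[X]) {j : ℕ} (hj : j < M) :
    ((X * f) %ₘ ((X : F[X]) ^ M - C μ)).coeff j =
      if j = 0 then μ * (f %ₘ ((X : F[X]) ^ M - C μ)).coeff (M - 1)
      else (f %ₘ ((X : F[X]) ^ M - C μ)).coeff (j - 1) := by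
  set δ : F[X] := (X : F[X]) ^ M - C μ with hδdef
  have hδ : δ.Monic := monic_X_pow_sub_C _ hM.ne'
  set r := f %ₘ δ with hrdef
  have hr : r.natDegree ≤ M - 1 :=
    degLt_natDeg hM ((degree_X_pow_sub_C hM μ) ▸ degree_modByMonic_lt f hδ)
  set t := r.coeff (M - 1) with htdef
  set e : F[X] := X * r - C t * δ with hedef
  have hδcoeff : ∀ k : ℕ, δ.coeff k = (if k = M then 1 else 0) - (if k = 0 then μ else 0) := by
    intro k
    rw [hδdef, Polynomial.coeff_sub, Polynomial.coeff_X_pow, Polynomial.coeff_C]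
  have hXr : ∀ k : ℕ, (X * r).coeff k = if k = 0 then 0 else r.coeff (k - 1) := by
    intro k
    cases k with
    | zero => simp
    | succ k => simp [Polynomial.coeff_X_mul]
  have hf2 : f = r + δ * (f /ₘ δ) := by
    rw [hrdef]; exact (modByMonic_add_div f δ).symm
  have h1 : (X * f) %ₘ δ = e %ₘ δ := by
    apply modByMonic_eq_of_dvd_sub hδ
    refine ⟨X * (f /ₘ δ) + C t, ?_⟩
    nth_rewrite 1 [hf2]
    rw [hedef]; ring
  have hedeg : e.degree < δ.degree := by
    rw [degree_X_pow_sub_C hM μ, Polynomial.degree_lt_iff_coeff_zero]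
    intro k hk
    have hk' : M ≤ k := by exact_mod_cast hk
    rw [hedef, Polynomial.coeff_sub, hXr, coeff_C_mul, hδcoeff]
    rcases eq_or_lt_of_le hk' with hkM | hkM
    · rw [if_neg (by omega), if_pos hkM.symm, if_neg (by omega), ← hkM, ← htdef]
      ring
    · rw [if_neg (by omega), if_neg (by omega), if_neg (by omega),
        coeff_eq_zero_of_natDegree_lt (by omega : r.natDegree < k - 1)]
      ring
  have h2 : e %ₘ δ = e := (modByMonic_eq_self_iff hδ).2 hedeg
  rw [h1, h2, hedef, Polynomial.coeff_sub, hXr, coeff_C_mul, hδcoeff]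
  rcases eq_or_ne j 0 with rfl | hj0
  · rw [if_pos rfl, if_pos rfl, if_neg (by omega), if_pos rfl]
    ring
  · rw [if_neg hj0, if_neg hj0, if_neg (by omega), if_neg hj0]
    ring

/-- top coefficient of a product with a monic polynomial. -/
lemma coeff_top {r s : F[X]} {d e : ℕ} (hr : r.natDegree ≤ d) (hs : s.Monic)
    (he : s.natDegree = e) : (r * s).coeff (d + e) = r.coeff d := by
  rcases eq_or_ne s (X ^ e) with hse | hse
  · rw [hse, Polynomial.coeff_mul_X_pow]
  have hs0 : s ≠ 0 := hs.ne_zero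
  have hsdeg : s.degree = (e : WithBot ℕ) := by
    rw [Polynomial.degree_eq_natDegree hs0, he]
  have hdeglt : (s - X ^ e).degree < (e : WithBot ℕ) := by
    have h2 := Polynomial.degree_sub_lt (p := s) (q := X ^ e)
      (by rw [hsdeg, Polynomial.degree_X_pow]) hs0
      (by rw [hs.leadingCoeff, Polynomial.leadingCoeff_X_pow])
    rwa [hsdeg] at h2
  have he1 : 0 < e := by
    by_contra h'
    push_neg at h'
    interval_cases e
    rw [Nat.cast_zero, Nat.WithBot.lt_zero_iff, Polynomial.degree_eq_bot,
      sub_eq_zero] at hdeglt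
    exact hse hdeglt
  have hnd : (s - X ^ e).natDegree ≤ e - 1 := degLt_natDeg he1 hdeglt
  have hlt : (r * (s - X ^ e)).natDegree < d + e :=
    lt_of_le_of_lt natDegree_mul_le (by omega)
  have hsplit : r * s = r * X ^ e + r * (s - X ^ e) := by ring
  rw [hsplit, Polynomial.coeff_add, Polynomial.coeff_mul_X_pow,
    coeff_eq_zero_of_natDegree_lt hlt, add_zero]

lemma sum_mod {α : Type*} [DecidableEq α] (s : Finset α) (f : α → F[X]) (q : F[X]) :
    (∑ i ∈ s, f i) %ₘ q = ∑ i ∈ s, f i %ₘ q := by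
  induction s using Finset.induction_on with
  | empty => simp [Polynomial.zero_modByMonic]
  | insert _ _ h ih => rw [Finset.sum_insert h, Finset.sum_insert h, Polynomial.add_modByMonic, ih]

section Family

variable {ℓ : ℕ} (m : Fin ℓ → ℕ) (μ : Fin ℓ → F)

noncomputable def delta (p : Fin ℓ) : F[X] := X ^ (m p) - C (μ p)

noncomputable def Pic (p : Fin ℓ) : F[X] := ∏ q ∈ Finset.univ.erase p, delta m μ q

noncomputable def Pbig : F[X] := ∏ q, delta m μ q

variable {m} {μ}

lemma monic_delta (hm : ∀ p, 0 < m p) (p : Fin ℓ) : (delta m μ p).Monic :=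
  monic_X_pow_sub_C _ (hm p).ne'

lemma degree_delta (hm : ∀ p, 0 < m p) (p : Fin ℓ) :
    (delta m μ p).degree = (m p : WithBot ℕ) := degree_X_pow_sub_C (hm p) _

lemma natDegree_delta (p : Fin ℓ) : (delta m μ p).natDegree = m p :=
  natDegree_X_pow_sub_C

lemma monic_Pic (hm : ∀ p, 0 < m p) (p : Fin ℓ) : (Pic m μ p).Monic :=
  monic_prod_of_monic _ _ fun q _ => monic_delta hm q

lemma monic_Pbig (hm : ∀ p, 0 < m p) : (Pbig m μ).Monic :=
  monic_prod_of_monic _ _ fun q _ => monic_delta hm q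

lemma delta_mul_Pic (p : Fin ℓ) : delta m μ p * Pic m μ p = Pbig m μ :=
  Finset.mul_prod_erase _ _ (Finset.mem_univ p)

lemma mle (p : Fin ℓ) : m p ≤ ∑ q, m q :=
  Finset.single_le_sum (fun i _ => Nat.zero_le _) (Finset.mem_univ p)

lemma natDegree_Pbig (hm : ∀ p, 0 < m p) : (Pbig m μ).natDegree = ∑ q, m q := by
  rw [Pbig, natDegree_prod_of_monic _ _ (fun q _ => monic_delta hm q)]
  simp [natDegree_delta]

lemma natDegree_Pic (hm : ∀ p, 0 < m p) (p : Fin ℓ) :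
    (Pic m μ p).natDegree = (∑ q, m q) - m p := by
  rw [Pic, natDegree_prod_of_monic _ _ (fun q _ => monic_delta hm q)]
  simp only [natDegree_delta]
  have := Finset.add_sum_erase Finset.univ m (Finset.mem_univ p)
  omega

lemma rdeg (hm : ∀ p, 0 < m p) (p : Fin ℓ) (f : F[X]) :
    (f %ₘ delta m μ p).natDegree ≤ m p - 1 :=
  by
  have h := degree_modByMonic_lt f (monic_delta (μ := μ) hm p)
  rw [degree_delta hm p] at h
  exact degLt_natDeg (hm p) h

lemma tau_T1 (hm : ∀ p, 0 < m p) (p : Fin ℓ) (f : F[X]) :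
    ((f * Pic m μ p) %ₘ Pbig m μ).coeff ((∑ q, m q) - 1) =
      (f %ₘ delta m μ p).coeff (m p - 1) := by
  have hδ := monic_delta (μ := μ) hm p
  have hP := monic_Pbig (μ := μ) hm
  have hPi := monic_Pic (μ := μ) hm p
  set n := ∑ q, m q with hndef
  have hn : 0 < n := lt_of_lt_of_le (hm p) (mle p)
  set r := f %ₘ delta m μ p with hrdef
  have hf2 : f = r + delta m μ p * (f /ₘ delta m μ p) :=
    (modByMonic_add_div f (delta m μ p)).symm
  have h1 : (f * Pic m μ p) %ₘ Pbig m μ = (r * Pic m μ p) %ₘ Pbig m μ := by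
    apply modByMonic_eq_of_dvd_sub hP
    refine ⟨f /ₘ delta m μ p, ?_⟩
    nth_rewrite 1 [hf2]
    rw [← delta_mul_Pic p]; ring
  have hrdeg : r.natDegree ≤ m p - 1 := rdeg hm p f
  have hPdeg : (Pbig m μ).degree = (n : WithBot ℕ) := by
    rw [Polynomial.degree_eq_natDegree hP.ne_zero, natDegree_Pbig hm]
  have h2 : (r * Pic m μ p) %ₘ Pbig m μ = r * Pic m μ p := by
    rw [modByMonic_eq_self_iff hP, hPdeg]
    rcases eq_or_ne r 0 with hr0 | hr0
    · rw [hr0, zero_mul, Polynomial.degree_zero]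
      exact WithBot.bot_lt_coe _
    · have hlt : (r * Pic m μ p).natDegree < n := by
        have h3 : (r * Pic m μ p).natDegree ≤ r.natDegree + (Pic m μ p).natDegree :=
          natDegree_mul_le
        have h4 := natDegree_Pic (μ := μ) hm p
        have h5 := mle (m := m) p
        have h6 := hm p
        omega
      exact lt_of_le_of_lt Polynomial.degree_le_natDegree (by exact_mod_cast hlt)
  rw [h1, h2]
  have hco := coeff_top (r := r) (s := Pic m μ p) hrdeg hPi rfl
  rw [show n - 1 = (m p - 1) + (Pic m μ p).natDegree by
    rw [natDegree_Pic hm p]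
    have h5 := mle (m := m) p
    have h6 := hm p
    omega]
  exact hco

lemma tau_T2 (hm : ∀ p, 0 < m p) {g : Fin ℓ → F[X]} {Pol : F[X]}
    (hg : ∑ p, g p * Pic m μ p = Pol * Pbig m μ) :
    ∑ p, (g p %ₘ delta m μ p).coeff (m p - 1) = 0 := by
  have hP := monic_Pbig (μ := μ) hm
  have h1 : ∑ p, (g p %ₘ delta m μ p).coeff (m p - 1) =
      ∑ p, ((g p * Pic m μ p) %ₘ Pbig m μ).coeff ((∑ q, m q) - 1) :=
    Finset.sum_congr rfl fun p _ => (tau_T1 hm p (g p)).symm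
  rw [h1, ← Polynomial.finset_sum_coeff, ← sum_mod, hg,
    (modByMonic_eq_zero_iff_dvd hP).2 ⟨Pol, mul_comm Pol (Pbig m μ)⟩,
    Polynomial.coeff_zero]

lemma tau_T3 (hm : ∀ p, 0 < m p) {g : Fin ℓ → F[X]}
    (h : ∀ s : ℕ, ∑ p, ((X ^ s * g p) %ₘ delta m μ p).coeff (m p - 1) = 0) :
    ∃ Pol, ∑ p, g p * Pic m μ p = Pol * Pbig m μ := by
  have hP := monic_Pbig (μ := μ) hm
  set n := ∑ q, m q with hndef
  set r : Fin ℓ → F[X] := fun p => g p %ₘ delta m μ p with hrdef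
  set S : F[X] := ∑ p, r p * Pic m μ p with hSdef
  have hgr : ∀ p, g p * Pic m μ p = r p * Pic m μ p + (g p /ₘ delta m μ p) * Pbig m μ := by
    intro p
    have h2 : g p = r p + delta m μ p * (g p /ₘ delta m μ p) :=
      (modByMonic_add_div _ (delta m μ p)).symm
    nth_rewrite 1 [h2]
    rw [← delta_mul_Pic p]; ring
  have hS0 : S = 0 := by
    by_contra hS
    rcases isEmpty_or_nonempty (Fin ℓ) with hℓ | hℓ
    · exact hS (by rw [hSdef, Finset.univ_eq_empty, Finset.sum_empty])
    obtain ⟨p0⟩ := hℓ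
    have hn : 0 < n := lt_of_lt_of_le (hm p0) (mle p0)
    have hd : S.natDegree ≤ n - 1 := by
      apply Polynomial.natDegree_sum_le_of_forall_le
      intro p _
      have h3 : (r p * Pic m μ p).natDegree ≤ (r p).natDegree + (Pic m μ p).natDegree :=
        natDegree_mul_le
      have h4 := natDegree_Pic (μ := μ) hm p
      have h5 := mle (m := m) p
      have h6 := hm p
      have h7 : (r p).natDegree ≤ m p - 1 := rdeg (μ := μ) hm p (g p)
      omega
    set d := S.natDegree with hddef
    set s := n - 1 - d with hsdef
    have hmod : ∀ p, (X ^ s * g p) %ₘ delta m μ p = (X ^ s * r p) %ₘ delta m μ p := by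
      intro p
      apply modByMonic_eq_of_dvd_sub (monic_delta hm p)
      refine ⟨X ^ s * (g p /ₘ delta m μ p), ?_⟩
      have h2 : g p = r p + delta m μ p * (g p /ₘ delta m μ p) :=
        (modByMonic_add_div _ (delta m μ p)).symm
      nth_rewrite 1 [h2]
      ring
    have hzero := h s
    rw [Finset.sum_congr rfl (fun p _ => by rw [hmod p])] at hzero
    rw [Finset.sum_congr rfl (fun p _ => (tau_T1 hm p (X ^ s * r p)).symm)] at hzero
    rw [← Polynomial.finset_sum_coeff, ← sum_mod] at hzero
    have hsum : ∑ p, X ^ s * r p * Pic m μ p = X ^ s * S := by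
      rw [hSdef, Finset.mul_sum]
      exact Finset.sum_congr rfl fun p _ => by ring
    rw [hsum] at hzero
    have hXS : (X ^ s * S) %ₘ Pbig m μ = X ^ s * S := by
      rw [modByMonic_eq_self_iff hP]
      have hlt : (X ^ s * S).natDegree < n := by
        have h3 : (X ^ s * S).natDegree ≤ (X ^ s : F[X]).natDegree + S.natDegree :=
          natDegree_mul_le
        rw [Polynomial.natDegree_X_pow] at h3
        omega
      rw [Polynomial.degree_eq_natDegree hP.ne_zero, natDegree_Pbig hm]
      exact lt_of_le_of_lt Polynomial.degree_le_natDegree (by exact_mod_cast hlt)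
    rw [hXS, show n - 1 = d + s by omega, Polynomial.coeff_X_pow_mul] at hzero
    exact (Polynomial.leadingCoeff_ne_zero.2 hS) hzero
  refine ⟨∑ p, g p /ₘ delta m μ p, ?_⟩
  rw [Finset.sum_congr rfl (fun p _ => hgr p), Finset.sum_add_distrib, ← hSdef, hS0,
    zero_add, ← Finset.sum_mul]

lemma delta_apply (p : Fin ℓ) : delta m μ p = X ^ (m p) - C (μ p) := rfl

lemma Pbig_ne_zero (hm : ∀ p, 0 < m p) : Pbig (μ := μ) m ≠ 0 :=
  (monic_Pbig hm).ne_zero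

lemma Pbig_def : Pbig m μ = ∏ q, delta m μ q := rfl

section MatrixPart

variable {H B : Matrix (Fin ℓ) (Fin ℓ) F[X]}

lemma detBH (hBH : B * H = Matrix.diagonal (delta m μ)) :
    B.det * H.det = Pbig m μ := by
  rw [← Matrix.det_mul, hBH, Matrix.det_diagonal]
  rfl

lemma det_H_ne_zero (hm : ∀ p, 0 < m p)
    (hBH : B * H = Matrix.diagonal (delta m μ)) : H.det ≠ 0 := by
  intro h0
  exact Pbig_ne_zero (μ := μ) hm (by rw [← detBH hBH, h0, mul_zero])

lemma det_B_ne_zero (hm : ∀ p, 0 < m p)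
    (hBH : B * H = Matrix.diagonal (delta m μ)) : B.det ≠ 0 := by
  intro h0
  exact Pbig_ne_zero (μ := μ) hm (by rw [← detBH hBH, h0, zero_mul])

/-- the key matrix identity `H · diag(Π') · B = P · 1`. -/
lemma key_matrix (hm : ∀ p, 0 < m p)
    (hBH : B * H = Matrix.diagonal (delta m μ)) (k i : Fin ℓ) :
    ∑ p, H k p * Pic m μ p * B p i = if k = i then Pbig m μ else 0 := by
  classical
  set M : Matrix (Fin ℓ) (Fin ℓ) F[X] := H * Matrix.diagonal (Pic m μ) * B with hMdef
  have hdiag : Matrix.diagonal (Pic m μ) * Matrix.diagonal (delta m μ) =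
      Matrix.diagonal (fun _ => Pbig m μ) := by
    have h5 : (fun p => Pic m μ p * delta m μ p) = fun _ => Pbig m μ := by
      funext p
      rw [mul_comm]
      exact delta_mul_Pic p
    rw [Matrix.diagonal_mul_diagonal, h5]
  have hMH : M * H = (Pbig m μ • (1 : Matrix (Fin ℓ) (Fin ℓ) F[X])) * H := by
    calc M * H = H * (Matrix.diagonal (Pic m μ) * (B * H)) := by
          rw [hMdef]; noncomm_ring
      _ = H * Matrix.diagonal (fun _ => Pbig m μ) := by rw [hBH, hdiag]
      _ = (Pbig m μ • (1 : Matrix (Fin ℓ) (Fin ℓ) F[X])) * H := by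
          rw [Matrix.smul_mul, Matrix.one_mul]
          ext a b
          rw [Matrix.mul_diagonal, Matrix.smul_apply, smul_eq_mul, mul_comm]
  have hzero : (M - Pbig m μ • 1) * H = 0 := by
    rw [Matrix.sub_mul, hMH, sub_self]
  have hzero2 : (M - Pbig m μ • 1) * (H.det • (1 : Matrix (Fin ℓ) (Fin ℓ) F[X])) = 0 := by
    rw [← Matrix.mul_adjugate H, ← Matrix.mul_assoc, hzero, Matrix.zero_mul]
  have hz3 : H.det • (M - Pbig m μ • 1) = (0 : Matrix (Fin ℓ) (Fin ℓ) F[X]) := by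
    calc H.det • (M - Pbig m μ • 1)
        = (M - Pbig m μ • 1) * (H.det • (1 : Matrix (Fin ℓ) (Fin ℓ) F[X])) := by
          rw [Matrix.mul_smul, Matrix.mul_one]
      _ = 0 := hzero2
  have hfin : ∀ a b, H.det * (M - Pbig m μ • 1) a b = 0 := by
    intro a b
    simpa using congrFun (congrFun hz3 a) b
  have hdetH := det_H_ne_zero (μ := μ) hm hBH
  have hM : ∀ a b, M a b = (Pbig m μ • (1 : Matrix (Fin ℓ) (Fin ℓ) F[X])) a b := by
    intro a b
    have h2 := hfin a b
    rcases mul_eq_zero.1 h2 with h3 | h3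
    · exact absurd h3 hdetH
    · have h4 : M a b - (Pbig m μ • (1 : Matrix (Fin ℓ) (Fin ℓ) F[X])) a b = 0 := by
        simpa [Matrix.sub_apply] using h3
      exact sub_eq_zero.1 h4
  have hMentry : M k i = ∑ p, H k p * Pic m μ p * B p i := by
    rw [hMdef, Matrix.mul_apply]
    refine Finset.sum_congr rfl fun p _ => ?_
    rw [Matrix.mul_diagonal]
  rw [← hMentry, hM k i, Matrix.smul_apply, Matrix.one_apply, smul_eq_mul]
  split <;> simp

end MatrixPart

end Family

section CodePart

variable {ℓ : ℕ} {m : Fin ℓ → ℕ}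

/-- blockwise constacyclic shift as a linear map. -/
def shiftMap (lam : Fin ℓ → F) : (∀ i, Fin (m i) → F) →ₗ[F] (∀ i, Fin (m i) → F) where
  toFun v := fun i => blockShift (lam i) (v i)
  map_add' u v := by
    funext i j
    simp only [blockShift, Pi.add_apply]
    split <;> ring
  map_smul' c v := by
    funext i j
    simp only [blockShift, Pi.smul_apply, smul_eq_mul, RingHom.id_apply]
    split <;> ring

lemma shiftMap_injective {lam : Fin ℓ → F} (hlam : ∀ i, lam i ≠ 0) :
    Function.Injective (shiftMap (m := m) lam) := by
  intro u v h
  funext i j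
  have hij : ∀ j' : Fin (m i), blockShift (lam i) (u i) j' = blockShift (lam i) (v i) j' :=
    fun j' => congrFun (congrFun h i) j'
  by_cases hj : j.val + 1 < m i
  · have h2 := hij ⟨j.val + 1, hj⟩
    simp only [blockShift] at h2
    rw [if_neg (by omega), if_neg (by omega)] at h2
    simpa using h2
  · have h0 : (0 : ℕ) < m i := lt_of_le_of_lt (Nat.zero_le _) j.isLt
    have h2 : lam i * u i ⟨m i - 1, by omega⟩ = lam i * v i ⟨m i - 1, by omega⟩ := by
      simpa [blockShift] using hij ⟨0, h0⟩
    have h3 := mul_left_cancel₀ (hlam i) h2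
    have hjval : j = (⟨m i - 1, by omega⟩ : Fin (m i)) := by
      apply Fin.ext
      have := j.isLt
      simp only []
      omega
    rw [hjval]
    exact h3

lemma shift_surj {lam : Fin ℓ → F} (hlam : ∀ i, lam i ≠ 0)
    {CC : Submodule F (∀ i, Fin (m i) → F)} (hC : IsMT lam CC) :
    ∀ v ∈ CC, ∃ w ∈ CC, shiftMap lam w = v := by
  have hmaps : ∀ x ∈ CC, shiftMap lam x ∈ CC := fun x hx => hC x hx
  let f : CC →ₗ[F] CC := (shiftMap lam).restrict hmaps
  have hinj : Function.Injective f := by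
    intro a b hab
    apply Subtype.ext
    apply shiftMap_injective hlam
    exact congrArg Subtype.val hab
  have hsurj : Function.Surjective f := LinearMap.injective_iff_surjective.mp hinj
  intro v hv
  obtain ⟨⟨w, hw⟩, hfw⟩ := hsurj ⟨v, hv⟩
  exact ⟨w, hw, congrArg Subtype.val hfw⟩

/-- blockwise coordinate reversal. -/
def rhoMap : (∀ i : Fin ℓ, Fin (m i) → F) →ₗ[F] (∀ i, Fin (m i) → F) where
  toFun v := fun i j => v i j.rev
  map_add' _ _ := rfl
  map_smul' _ _ := rfl

lemma rhoMap_invol (v : ∀ i : Fin ℓ, Fin (m i) → F) : rhoMap (rhoMap v) = v := by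
  funext i j
  show v i j.rev.rev = v i j
  rw [Fin.rev_rev]

lemma mem_map_rho {CC : Submodule F (∀ i : Fin ℓ, Fin (m i) → F)}
    {x : ∀ i, Fin (m i) → F} : x ∈ CC.map rhoMap ↔ rhoMap x ∈ CC := by
  constructor
  · rintro ⟨c, hc, rfl⟩
    rwa [rhoMap_invol]
  · intro h
    exact ⟨rhoMap x, h, rhoMap_invol x⟩

lemma rev_shift {lam : Fin ℓ → F} (hlam : ∀ i, lam i ≠ 0)
    {v w : ∀ i : Fin ℓ, Fin (m i) → F} (hw : shiftMap lam w = v) (p : Fin ℓ) :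
    blockShift ((lam p)⁻¹) (fun j => v p j.rev) = fun j => w p j.rev := by
  have hv : ∀ j' : Fin (m p), v p j' =
      if j'.val = 0 then lam p * w p ⟨m p - 1, by have := j'.isLt; omega⟩
      else w p ⟨j'.val - 1, by have := j'.isLt; omega⟩ := by
    intro j'
    rw [← hw]
    rfl
  funext j
  have hjlt := j.isLt
  simp only [blockShift]
  split
  · next h0 =>
    -- j.val = 0
    have hrev : ((⟨m p - 1, by omega⟩ : Fin (m p)).rev).val = 0 := by
      simp only [Fin.val_rev]
      omega
    rw [hv]
    rw [if_pos hrev]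
    rw [← mul_assoc, inv_mul_cancel₀ (hlam p), one_mul]
    congr 1
    apply Fin.ext
    simp only [Fin.val_rev]
    omega
  · next h0 =>
    -- j.val ≠ 0
    have hrev : ((⟨j.val - 1, by omega⟩ : Fin (m p)).rev).val = m p - j.val := by
      simp only [Fin.val_rev]
      omega
    rw [hv]
    rw [if_neg (by omega)]
    congr 1
    apply Fin.ext
    simp only [Fin.val_rev, hrev]
    omega

/-- reduction-mod-delta as a linear map to the code space. -/
noncomputable def piMap (m : Fin ℓ → ℕ) (μ : Fin ℓ → F) :
    (Fin ℓ → F[X]) →ₗ[F] (∀ i, Fin (m i) → F) where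
  toFun q := fun i j => ((q i) %ₘ delta m μ i).coeff j
  map_add' u v := by
    funext i j
    simp [Polynomial.add_modByMonic]
  map_smul' c v := by
    funext i j
    simp [Polynomial.smul_modByMonic]

section Phi

variable (F m) in
/-- the standard dot product bilinear form on the code space. -/
noncomputable def PhiForm : LinearMap.BilinForm F (∀ i : Fin ℓ, Fin (m i) → F) :=
  LinearMap.mk₂ F (fun c v => ∑ i, ∑ j, c i j * v i j)
    (fun a b c => by simp [add_mul, Finset.sum_add_distrib])
    (fun r a b => by simp [Finset.mul_sum, mul_assoc])
    (fun a b c => by simp [mul_add, Finset.sum_add_distrib])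
    (fun r a b => by
      simp only [Pi.smul_apply, smul_eq_mul, Finset.mul_sum]
      refine Finset.sum_congr rfl fun i _ => Finset.sum_congr rfl fun j _ => by ring)

lemma PhiForm_apply (c v : ∀ i : Fin ℓ, Fin (m i) → F) :
    PhiForm F m c v = ∑ i, ∑ j, c i j * v i j := rfl

lemma Phi_symm (c v : ∀ i : Fin ℓ, Fin (m i) → F) : PhiForm F m c v = PhiForm F m v c := by
  rw [PhiForm_apply, PhiForm_apply]
  exact Finset.sum_congr rfl fun i _ => Finset.sum_congr rfl fun j _ => mul_comm _ _

lemma Phi_refl : (PhiForm F m).IsRefl := by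
  intro x y h
  rw [Phi_symm]
  exact h

lemma Phi_nondeg : (PhiForm F m).Nondegenerate := by
  classical
  refine (LinearMap.IsRefl.nondegenerate_iff_separatingLeft (B := PhiForm F m) Phi_refl).2 ?_
  intro x hx
  funext i j
  have h := hx (Pi.single i (Pi.single j 1))
  rw [PhiForm_apply] at h
  rw [Finset.sum_eq_single i] at h
  · rw [Finset.sum_eq_single j] at h
    · rw [Pi.single_eq_same, Pi.single_eq_same, mul_one] at h
      simpa using h
    · intro j' _ hj'
      rw [Pi.single_eq_same, Pi.single_eq_of_ne hj', mul_zero]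
    · intro hj; exact absurd (Finset.mem_univ j) hj
  · intro i' _ hi'
    rw [Pi.single_eq_of_ne hi']
    simp
  · intro hi; exact absurd (Finset.mem_univ i) hi

lemma dualCode_eq_orth (W : Submodule F (∀ i : Fin ℓ, Fin (m i) → F)) :
    dualCodeMT W = (PhiForm F m).orthogonal W := by
  ext v
  exact Iff.rfl

lemma dual_dual (CC : Submodule F (∀ i : Fin ℓ, Fin (m i) → F)) :
    dualCodeMT (dualCodeMT CC) = CC := by
  rw [dualCode_eq_orth, dualCode_eq_orth]
  exact LinearMap.BilinForm.orthogonal_orthogonal Phi_nondeg Phi_refl CC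

end Phi

/-- polynomial lift of a codeword. -/
noncomputable def upoly (v : ∀ i : Fin ℓ, Fin (m i) → F) : Fin ℓ → F[X] :=
  fun p => ∑ j : Fin (m p), C (v p j) * X ^ (j : ℕ)

lemma upoly_mod {μ : Fin ℓ → F} (hm : ∀ p, 0 < m p) (v : ∀ i, Fin (m i) → F) (p : Fin ℓ) :
    upoly v p %ₘ delta m μ p = upoly v p := by
  rw [modByMonic_eq_self_iff (monic_delta hm p), degree_delta hm p]
  have hnd : (upoly v p).natDegree ≤ m p - 1 := by
    apply Polynomial.natDegree_sum_le_of_forall_le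
    intro j _
    apply le_trans (Polynomial.natDegree_C_mul_le _ _)
    rw [Polynomial.natDegree_X_pow]
    have := j.isLt
    omega
  have hlt : (upoly v p).natDegree < m p := by
    have := hm p
    omega
  exact lt_of_le_of_lt Polynomial.degree_le_natDegree (by exact_mod_cast hlt)
  
lemma pi_upoly {μ : Fin ℓ → F} (hm : ∀ p, 0 < m p) (v : ∀ i, Fin (m i) → F) :
    piMap m μ (upoly v) = v := by
  funext p j
  show (upoly v p %ₘ delta m μ p).coeff j = v p j
  rw [upoly_mod hm v p, upoly, Polynomial.finset_sum_coeff]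
  rw [Finset.sum_eq_single j]
  · simp
  · intro j' _ hj'
    rw [Polynomial.coeff_C_mul, Polynomial.coeff_X_pow,
      if_neg (by simpa [Fin.val_inj] using hj'.symm), mul_zero]
  · intro hj; exact absurd (Finset.mem_univ j) hj

lemma pair {μ : Fin ℓ → F} (hm : ∀ p, 0 < m p) (u r : Fin ℓ → F[X]) :
    ∑ p, ∑ j : Fin (m p), (piMap m μ u) p j * (piMap m μ r) p j.rev
      = ∑ p, ((u p * r p) %ₘ delta m μ p).coeff (m p - 1) := by
  refine Finset.sum_congr rfl fun p _ => ?_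
  have hps := pair_sum (hm p) (μ p) (u p) (r p)
  rw [show ((u p * r p) %ₘ delta m μ p).coeff (m p - 1) =
    ((u p * r p) %ₘ ((X : F[X]) ^ (m p) - C (μ p))).coeff (m p - 1) from rfl, ← hps]
  refine Finset.sum_congr rfl fun j _ => ?_
  congr 1
  show (r p %ₘ delta m μ p).coeff (j.rev : ℕ) =
    (r p %ₘ ((X : F[X]) ^ (m p) - C (μ p))).coeff (m p - 1 - (j : ℕ))
  congr 1
  rw [Fin.val_rev]
  omega

lemma pi_X_smul {μ : Fin ℓ → F} (hm : ∀ p, 0 < m p) (r : Fin ℓ → F[X]) :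
    piMap m μ ((X : F[X]) • r) = fun p => blockShift (μ p) (piMap m μ r p) := by
  funext p j
  have h := mod_X_mul (hm p) (μ p) (r p) j.isLt
  show ((X * r p) %ₘ delta m μ p).coeff j = _
  rw [show delta m μ p = (X : F[X]) ^ (m p) - C (μ p) from rfl, h]
  rfl

lemma congr_block {w : ∀ p : Fin ℓ, Fin (m p) → F} {p' p : Fin ℓ} (h : p' = p)
    (j : Fin (m p')) : w p' j = w p (Fin.cast (congrArg m h) j) := by
  subst h
  rfl

lemma rows_linindep {A : Matrix (Fin ℓ) (Fin ℓ) F[X]} (hA : A.det ≠ 0) :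
    LinearIndependent F[X] (fun i => A i) := by
  rw [Fintype.linearIndependent_iff]
  intro g hg i0
  have h0 : ∀ k, ∑ i, g i * A i k = 0 := by
    intro k
    have := congrFun hg k
    simpa [Finset.sum_apply] using this
  have h1 : ∑ k, (∑ i, g i * A i k) * A.adjugate k i0 = 0 := by
    simp only [h0, zero_mul, Finset.sum_const_zero]
  have h2 : ∑ k, (∑ i, g i * A i k) * A.adjugate k i0 =
      ∑ i, g i * ((A * A.adjugate) i i0) := by
    simp only [Finset.sum_mul]
    rw [Finset.sum_comm]
    refine Finset.sum_congr rfl fun i _ => ?_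
    rw [Matrix.mul_apply, Finset.mul_sum]
    exact Finset.sum_congr rfl fun k _ => (mul_assoc _ _ _)
  rw [h2, Matrix.mul_adjugate] at h1
  have h3 : ∑ i, g i * (A.det • (1 : Matrix (Fin ℓ) (Fin ℓ) F[X])) i i0 = g i0 * A.det := by
    rw [Finset.sum_eq_single i0]
    · rw [Matrix.smul_apply, Matrix.one_apply_eq, smul_eq_mul, mul_one, mul_comm]
    · intro i _ hi
      rw [Matrix.smul_apply, Matrix.one_apply_ne hi, smul_eq_mul, mul_zero, mul_zero]
    · intro hi; exact absurd (Finset.mem_univ i0) hi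
  rw [h3] at h1
  rcases mul_eq_zero.1 h1 with h | h
  · exact h
  · exact absurd h hA

end CodePart

end Stmt7Aux

open Stmt7Aux in
/-- Let `C` be a Λ-MT code with block lengths `(m₁,…,m_ℓ)` and set
`Γ = (λ_ℓ⁻¹,…,λ₁⁻¹)`.  Then the reversed code `R` of `C` (reverse the coordinates of every
codeword) is a Γ-MT code with block lengths `(m_ℓ,…,m₁)`, and `Bᵀ * J_ℓ` is a GPM of `R`,
where `H` is a GPM of the Euclidean dual `C^⊥`, `B` satisfies
`B * H = diag(x^{mᵢ} - λᵢ⁻¹)`, and `J_ℓ` is the backward identity matrix. -/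
theorem stmt7 {F : Type*} [Field F] [Fintype F] {ℓ : ℕ} {m : Fin ℓ → ℕ}
    (hm : ∀ i, 0 < m i) {lam : Fin ℓ → F} (hlam : ∀ i, lam i ≠ 0)
    (CC : Submodule F (∀ i, Fin (m i) → F)) (hC : IsMT lam CC)
    (H B : Matrix (Fin ℓ) (Fin ℓ) (Polynomial F))
    (hH : IsGPM (fun i => (lam i)⁻¹) m (dualCodeMT CC) H)
    (hB : B * H = Matrix.diagonal (fun i => X ^ (m i) - Polynomial.C ((lam i)⁻¹))) :
    IsMT (fun i => (lam i.rev)⁻¹) (CC.map revMT) ∧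
    IsGPM (fun i => (lam i.rev)⁻¹) (fun i => m i.rev) (CC.map revMT)
      (B.transpose * (1 : Matrix (Fin ℓ) (Fin ℓ) (Polynomial F)).submatrix id Fin.rev) := by
  classical
  set μ : Fin ℓ → F := fun i => (lam i)⁻¹ with hμdef
  set G' : Matrix (Fin ℓ) (Fin ℓ) (Polynomial F) :=
    B.transpose * (1 : Matrix (Fin ℓ) (Fin ℓ) (Polynomial F)).submatrix id Fin.rev with hG'def
  have hBH : B * H = Matrix.diagonal (delta m μ) := hB
  have hA0 : ∀ v ∈ CC, ∃ w ∈ CC, ∀ p : Fin ℓ,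
      blockShift ((lam p)⁻¹) (fun j => v p j.rev) = fun j => w p j.rev := by
    intro v hv
    obtain ⟨w, hw, hsw⟩ := shift_surj hlam hC v hv
    exact ⟨w, hw, fun p => rev_shift hlam hsw p⟩
  constructor
  · -- reversed code is Γ-MT
    intro v hv
    obtain ⟨c, hc, hrc⟩ := hv
    obtain ⟨w, hw, hA⟩ := hA0 c hc
    refine ⟨w, hw, ?_⟩
    funext i
    rw [← hrc]
    exact (hA i.rev).symm
  refine ⟨?_, ?_⟩
  · -- linear independence of the rows of `Bᵀ * J`
    have hdetB : B.det ≠ 0 := det_B_ne_zero (μ := μ) hm hBH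
    have hJJ : ((1 : Matrix (Fin ℓ) (Fin ℓ) (Polynomial F)).submatrix id Fin.rev) *
        ((1 : Matrix (Fin ℓ) (Fin ℓ) (Polynomial F)).submatrix id Fin.rev) = 1 := by
      ext a b
      rw [Matrix.mul_apply, Finset.sum_eq_single a.rev]
      · rw [Matrix.submatrix_apply, Matrix.submatrix_apply, id_eq, id_eq]
        rw [show (1 : Matrix (Fin ℓ) (Fin ℓ) (Polynomial F)) a a.rev.rev = 1 by
          rw [Fin.rev_rev]; exact Matrix.one_apply_eq a]
        rw [one_mul]
        by_cases hab : a = b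
        · subst hab
          rw [Matrix.one_apply_eq, Matrix.one_apply_eq]
        · rw [Matrix.one_apply_ne hab, Matrix.one_apply_ne (fun hr => hab (Fin.rev_inj.mp hr))]
      · intro k _ hk
        rw [Matrix.submatrix_apply, id_eq,
          Matrix.one_apply_ne (fun ha => hk (by rw [ha, Fin.rev_rev])), zero_mul]
      · intro hk; exact absurd (Finset.mem_univ _) hk
    have hdetG' : G'.det ≠ 0 := by
      rw [hG'def, Matrix.det_mul, Matrix.det_transpose]
      apply mul_ne_zero hdetB
      intro h0
      have h1 := congrArg Matrix.det hJJ
      rw [Matrix.det_mul, h0, mul_zero, Matrix.det_one] at h1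
      exact zero_ne_one h1
    exact rows_linindep hdetG'
  · -- the span equality
    set colB : Fin ℓ → (Fin ℓ → Polynomial F) := fun k p => B p k with hcolBdef
    set Nset : Set (Fin ℓ → Polynomial F) :=
      {r | piMap m μ r ∈ CC.map rhoMap} with hNsetdef
    have hB1 : dualCodeMT (dualCodeMT CC) = CC := dual_dual CC
    have hMD := hH.2
    have hrhoInv : ∀ x ∈ CC.map rhoMap,
        (fun p => blockShift (μ p) (x p)) ∈ CC.map rhoMap := by
      rintro x ⟨c, hc, rfl⟩
      obtain ⟨w, hw, hA⟩ := hA0 c hc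
      refine ⟨w, hw, ?_⟩
      funext p
      exact (hA p).symm
    -- generators of the column span lie in Nset
    have hGen : ∀ k, colB k ∈ Nset := by
      intro k
      show piMap m μ (colB k) ∈ CC.map rhoMap
      rw [mem_map_rho, ← hB1]
      intro v hv
      have hu : piMap m μ (upoly v) = v := pi_upoly hm v
      have humem : upoly v ∈ (Submodule.span (Polynomial F)
          (Set.range (fun i => H i)) : Set (Fin ℓ → Polynomial F)) := by
        rw [hMD]
        show toCode (fun i => (lam i)⁻¹) m (upoly v) ∈ dualCodeMT CC
        show piMap m μ (upoly v) ∈ dualCodeMT CC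
        rw [hu]; exact hv
      obtain ⟨cf, hcf⟩ := (Submodule.mem_span_range_iff_exists_fun (Polynomial F)).mp humem
      have hup : ∀ p, upoly v p = ∑ k', cf k' * H k' p := by
        intro p
        have := congrFun hcf p
        simpa [Finset.sum_apply] using this.symm
      have hcalc : ∑ i, ∑ j, v i j * (rhoMap (piMap m μ (colB k))) i j
          = ∑ p, ((upoly v p * colB k p) %ₘ delta m μ p).coeff (m p - 1) := by
        rw [← pair hm (upoly v) (colB k)]
        refine Finset.sum_congr rfl fun p _ => Finset.sum_congr rfl fun j _ => ?_
        rw [congrFun (congrFun hu p) j]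
        rfl
      rw [hcalc]
      have hsplit : ∀ p, ((upoly v p * colB k p) %ₘ delta m μ p).coeff (m p - 1)
          = ∑ k', ((cf k' * (H k' p * B p k)) %ₘ delta m μ p).coeff (m p - 1) := by
        intro p
        rw [hup p, Finset.sum_mul, sum_mod, Polynomial.finset_sum_coeff]
        refine Finset.sum_congr rfl fun k' _ => ?_
        congr 2
        show cf k' * H k' p * B p k = cf k' * (H k' p * B p k)
        ring
      rw [Finset.sum_congr rfl fun p _ => hsplit p, Finset.sum_comm]
      refine Finset.sum_eq_zero fun k' _ => ?_
      refine tau_T2 hm (Pol := if k' = k then cf k' else 0) ?_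
      calc ∑ p, cf k' * (H k' p * B p k) * Pic m μ p
          = cf k' * ∑ p, H k' p * Pic m μ p * B p k := by
            rw [Finset.mul_sum]
            exact Finset.sum_congr rfl fun p _ => by ring
        _ = cf k' * (if k' = k then Pbig m μ else 0) := by
            rw [key_matrix hm hBH k' k]
        _ = (if k' = k then cf k' else 0) * Pbig m μ := by
            split_ifs <;> ring
    -- Nset is an F[X]-submodule
    let Nsub : Submodule (Polynomial F) (Fin ℓ → Polynomial F) :=
      { carrier := Nset
        add_mem' := by
          intro a b ha hb
          show piMap m μ (a + b) ∈ CC.map rhoMap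
          rw [map_add]
          exact Submodule.add_mem _ ha hb
        zero_mem' := by
          show piMap m μ 0 ∈ CC.map rhoMap
          rw [map_zero]
          exact Submodule.zero_mem _
        smul_mem' := by
          intro c q hq
          induction c using Polynomial.induction_on with
          | C a =>
            show piMap m μ (C a • q) ∈ CC.map rhoMap
            have hCa : (C a : Polynomial F) • q = a • q := by
              funext p
              rw [Pi.smul_apply, Pi.smul_apply, smul_eq_mul, ← Polynomial.smul_eq_C_mul]
            rw [hCa, _root_.map_smul]
            exact Submodule.smul_mem _ _ hq
          | add f g hf hg =>
            rw [add_smul]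
            show piMap m μ (f • q + g • q) ∈ CC.map rhoMap
            rw [map_add]
            exact Submodule.add_mem _ hf hg
          | monomial n a ih =>
            have hstep : (C a * X ^ (n + 1)) • q = (X : Polynomial F) • ((C a * X ^ n) • q) := by
              rw [smul_smul]
              congr 1
              ring
            rw [hstep]
            show piMap m μ ((X : Polynomial F) • ((C a * X ^ n) • q)) ∈ CC.map rhoMap
            rw [pi_X_smul hm]
            exact hrhoInv _ ih }
    -- span of columns of B equals Nset
    have hNspan : (Submodule.span (Polynomial F) (Set.range colB) :
        Set (Fin ℓ → Polynomial F)) = Nset := by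
      apply Set.Subset.antisymm
      · have hle : Submodule.span (Polynomial F) (Set.range colB) ≤ Nsub := by
          rw [Submodule.span_le]
          rintro r ⟨k, rfl⟩
          exact hGen k
        exact fun q hq => hle hq
      · intro q hq
        have hc : rhoMap (piMap m μ q) ∈ CC := mem_map_rho.mp hq
        have hTs : ∀ k : Fin ℓ, ∀ s : ℕ,
            ∑ p, (((X : Polynomial F) ^ s * (H k p * q p)) %ₘ delta m μ p).coeff (m p - 1)
              = 0 := by
          intro k s
          have humem : (X : Polynomial F) ^ s • (fun p => H k p) ∈
              Submodule.span (Polynomial F) (Set.range (fun i => H i)) :=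
            Submodule.smul_mem _ _ (Submodule.subset_span ⟨k, rfl⟩)
          have hvD : piMap m μ ((X : Polynomial F) ^ s • (fun p => H k p)) ∈ dualCodeMT CC := by
            have h5 : ((X : Polynomial F) ^ s • (fun p => H k p)) ∈
                {q | toCode (fun i => (lam i)⁻¹) m q ∈ dualCodeMT CC} := by
              rw [← hMD]; exact humem
            exact h5
          have hpair0 : ∑ i, ∑ j, (rhoMap (piMap m μ q)) i j *
              (piMap m μ ((X : Polynomial F) ^ s • (fun p => H k p))) i j = 0 :=
            hvD (rhoMap (piMap m μ q)) hc
          have h6 : ∑ i, ∑ j, (rhoMap (piMap m μ q)) i j *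
              (piMap m μ ((X : Polynomial F) ^ s • (fun p => H k p))) i j
              = ∑ p, ∑ j : Fin (m p), (piMap m μ ((X : Polynomial F) ^ s • (fun p => H k p))) p j
                  * (piMap m μ q) p j.rev := by
            refine Finset.sum_congr rfl fun p _ => Finset.sum_congr rfl fun j _ => ?_
            exact mul_comm _ _
          rw [h6, pair hm] at hpair0
          rw [← hpair0]
          refine Finset.sum_congr rfl fun p _ => ?_
          congr 2
          show (X : Polynomial F) ^ s * (H k p * q p) = ((X : Polynomial F) ^ s • (fun p => H k p)) p * q p
          show (X : Polynomial F) ^ s * (H k p * q p) = (X : Polynomial F) ^ s * H k p * q p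
          ring
        have hT3 : ∀ k, ∃ Pol, ∑ p, (fun p => H k p * q p) p * Pic m μ p = Pol * Pbig m μ :=
          fun k => tau_T3 hm (fun s => hTs k s)
        choose Pol hPol using hT3
        have hqp : ∀ p, q p = ∑ k, Pol k * B p k := by
          intro p
          have hPne : Pbig (μ := μ) m ≠ 0 := Pbig_ne_zero hm
          apply mul_left_cancel₀ hPne
          symm
          calc Pbig m μ * ∑ k, Pol k * B p k
              = ∑ k, B p k * (Pol k * Pbig m μ) := by
                rw [Finset.mul_sum]
                exact Finset.sum_congr rfl fun k _ => by ring
            _ = ∑ k, B p k * (∑ r, H k r * q r * Pic m μ r) := by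
                refine Finset.sum_congr rfl fun k _ => ?_
                rw [← hPol k]
            _ = ∑ r, (∑ k, B p k * H k r) * (q r * Pic m μ r) := by
                simp only [Finset.mul_sum]
                rw [Finset.sum_comm]
                refine Finset.sum_congr rfl fun r _ => ?_
                rw [Finset.sum_mul]
                exact Finset.sum_congr rfl fun k _ => by ring
            _ = ∑ r, Matrix.diagonal (delta m μ) p r * (q r * Pic m μ r) := by
                refine Finset.sum_congr rfl fun r _ => ?_
                rw [← Matrix.mul_apply, hBH]
            _ = delta m μ p * (q p * Pic m μ p) := by
                rw [Finset.sum_eq_single p]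
                · rw [Matrix.diagonal_apply_eq]
                · intro r _ hr
                  rw [Matrix.diagonal_apply_ne' _ hr, zero_mul]
                · intro hp; exact absurd (Finset.mem_univ p) hp
            _ = Pbig m μ * q p := by
                rw [← delta_mul_Pic p]
                ring
        have hqspan : q = ∑ k, Pol k • colB k := by
          funext p
          rw [Finset.sum_apply]
          simp only [Pi.smul_apply, smul_eq_mul]
          exact hqp p
        rw [hqspan]
        exact Submodule.sum_mem _ fun k _ =>
          Submodule.smul_mem _ _ (Submodule.subset_span ⟨k, rfl⟩)
    -- transfer along the block permutation σ
    let σe : (Fin ℓ → Polynomial F) ≃ₗ[Polynomial F] (Fin ℓ → Polynomial F) :=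
      { toFun := fun q p => q p.rev
        invFun := fun q p => q p.rev
        map_add' := fun _ _ => rfl
        map_smul' := fun _ _ => rfl
        left_inv := fun q => by funext p; show q p.rev.rev = q p; rw [Fin.rev_rev]
        right_inv := fun q => by funext p; show q p.rev.rev = q p; rw [Fin.rev_rev] }
    have hσσ : ∀ q, σe (σe q) = q := fun q => by
      funext p; show q p.rev.rev = q p; rw [Fin.rev_rev]
    have hrowG' : (fun i => G' i) = fun i => σe (colB i) := by
      funext i j
      show G' i j = colB i j.rev
      rw [hG'def, Matrix.mul_apply, Finset.sum_eq_single j.rev]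
      · rw [Matrix.transpose_apply, Matrix.submatrix_apply, id_eq]
        rw [show (1 : Matrix (Fin ℓ) (Fin ℓ) (Polynomial F)) j.rev (Fin.rev j) = 1 from
          Matrix.one_apply_eq j.rev]
        rw [mul_one]
      · intro k _ hk
        rw [Matrix.submatrix_apply, id_eq, Matrix.one_apply_ne hk, mul_zero]
      · intro hk; exact absurd (Finset.mem_univ _) hk
    have hspanG' : (Submodule.span (Polynomial F) (Set.range (fun i => G' i)) :
        Set (Fin ℓ → Polynomial F)) =
        σe '' (Submodule.span (Polynomial F) (Set.range colB) :
          Set (Fin ℓ → Polynomial F)) := by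
      rw [hrowG']
      have hmapspan : Submodule.span (Polynomial F) (Set.range (fun i => σe (colB i))) =
          Submodule.map σe.toLinearMap (Submodule.span (Polynomial F) (Set.range colB)) := by
        rw [Submodule.map_span]
        congr 1
        rw [← Set.range_comp]
        rfl
      rw [hmapspan]
      exact Submodule.map_coe _ _
    have hTchar : ∀ q : Fin ℓ → Polynomial F,
        toCode (fun i => (lam i.rev)⁻¹) (fun i => m i.rev) q ∈ CC.map revMT ↔ σe q ∈ Nset := by
      intro q
      constructor
      · rintro ⟨c, hc, hrev⟩
        show piMap m μ (σe q) ∈ CC.map rhoMap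
        refine ⟨c, hc, ?_⟩
        funext p j
        have hpp : p.rev.rev = p := Fin.rev_rev p
        set j0 : Fin (m p.rev.rev) := Fin.cast (congrArg m hpp).symm j with hj0def
        have h8 := congrFun (congrFun hrev p.rev) j0
        have h9 : revMT c p.rev j0 = c p j.rev := by
          show c p.rev.rev j0.rev = c p j.rev
          rw [congr_block (w := c) hpp]
          congr 1
          apply Fin.ext
          simp only [Fin.val_rev, Fin.coe_cast, hj0def]
          rw [show m p.rev.rev = m p from congrArg m hpp]
        have h10 : toCode (fun i => (lam i.rev)⁻¹) (fun i => m i.rev) q p.rev j0 =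
            (q p.rev %ₘ delta m μ p).coeff j := by
          show (q p.rev %ₘ (X ^ (m p.rev.rev) - C ((lam p.rev.rev)⁻¹))).coeff j0.val = _
          have hval : (j0 : ℕ) = (j : ℕ) := rfl
          rw [hval, hpp]
          rfl
        show c p j.rev = (q p.rev %ₘ delta m μ p).coeff j
        rw [← h9, h8, h10]
      · rintro ⟨c, hc, hρ⟩
        refine ⟨c, hc, ?_⟩
        funext i j
        have h8 := congrFun (congrFun hρ i.rev) j
        show c i.rev j.rev = (q i %ₘ (X ^ (m i.rev) - C ((lam i.rev)⁻¹))).coeff j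
        rw [show c i.rev j.rev = rhoMap c i.rev j from rfl, h8]
        show ((q i.rev.rev) %ₘ delta m μ i.rev).coeff j = _
        rw [Fin.rev_rev]
        rfl
    have hT : {q | toCode (fun i => (lam i.rev)⁻¹) (fun i => m i.rev) q ∈ CC.map revMT}
        = σe '' Nset := by
      ext q
      rw [Set.mem_setOf_eq, hTchar q]
      constructor
      · intro h
        exact ⟨σe q, h, hσσ q⟩
      · rintro ⟨r, hr, rfl⟩
        rwa [hσσ r]
    rw [hspanG', hNspan]
    exact hT.symm
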